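/- Let Ā, H ∈ ℝ^{m×m}, χ > 0, κ ≥ ‖H‖, and let P ∈ ℝ^{m×m} be symmetric positive definite such that the symmetric block matrix [[ĀᵀP + PĀ + (1/χ)ĀᵀĀ, PH],[HᵀP, −χI_m]] is negative definite. Let λ ∈ (0,1), T > 0, and let φ : [0,T] → ℝ be differentiable with φ'(τ) = −2κφ(τ) − χ(φ(τ)² + 1) and λ ≤ φ(τ) ≤ λ^{−1} for all τ ∈ [0,T]. Then there exists ρ* > 0, depending only on Ā, H, P, χ, κ, λ, such that for every pair of differentiable functions x, e : [0,T] → ℝ^m satisfying ẋ(t) = Āx(t) + He(t) and ė(t) = −ẋ(t), the function U(t) = x(t)ᵀPx(t) + φ(t)e(t)ᵀe(t) satisfies U̇(t) ≤ −ρ* U(t) for all t ∈ [0,T]. -/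

import Mathlib

set_option maxHeartbeats 1000000

open Matrix
open scoped Matrix.Norms.L2Operator

section Aux

lemma hasDerivWithinAt_dot' {n : Type*} [Fintype n] {f g : ℝ → n → ℝ} {f' g' : n → ℝ}
    {s : Set ℝ} {t : ℝ} (hf : HasDerivWithinAt f f' s t) (hg : HasDerivWithinAt g g' s t) :
    HasDerivWithinAt (fun u => f u ⬝ᵥ g u) (f' ⬝ᵥ g t + f t ⬝ᵥ g') s t := by
  have hfi := hasDerivWithinAt_pi.1 hf
  have hgi := hasDerivWithinAt_pi.1 hg
  simp only [dotProduct]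
  rw [← Finset.sum_add_distrib]
  exact HasDerivWithinAt.fun_sum fun i _ => (hfi i).mul (hgi i)

lemma hasDerivWithinAt_mulVec' {n p : Type*} [Fintype n] [Fintype p] (M : Matrix p n ℝ)
    {f : ℝ → n → ℝ} {f' : n → ℝ} {s : Set ℝ} {t : ℝ} (hf : HasDerivWithinAt f f' s t) :
    HasDerivWithinAt (fun u => M.mulVec (f u)) (M.mulVec f') s t := by
  have hfi := hasDerivWithinAt_pi.1 hf
  refine hasDerivWithinAt_pi.2 fun i => ?_
  simp only [Matrix.mulVec, dotProduct]
  exact HasDerivWithinAt.fun_sum fun j _ => (hfi j).const_mul (M i j)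

lemma dot_self_nonneg' {n : Type*} [Fintype n] (z : n → ℝ) : 0 ≤ z ⬝ᵥ z :=
  Finset.sum_nonneg fun _ _ => mul_self_nonneg _

lemma dot_self_eq_zero' {n : Type*} [Fintype n] {z : n → ℝ} (h : z ⬝ᵥ z = 0) : z = 0 := by
  funext i
  have h1 : ∀ j ∈ Finset.univ, (0:ℝ) ≤ z j * z j := fun j _ => mul_self_nonneg _
  have h2 := (Finset.sum_eq_zero_iff_of_nonneg h1).1 h i (Finset.mem_univ i)
  show z i = 0
  nlinarith

lemma continuous_dot_self' {n : Type*} [Fintype n] :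
    Continuous fun z : n → ℝ => z ⬝ᵥ z := by
  simp only [dotProduct]
  exact continuous_finset_sum _ fun i _ => (continuous_apply i).mul (continuous_apply i)

lemma continuous_quad' {n : Type*} [Fintype n] (Q : Matrix n n ℝ) :
    Continuous fun z : n → ℝ => z ⬝ᵥ Q.mulVec z := by
  simp only [dotProduct, Matrix.mulVec]
  exact continuous_finset_sum _ fun i _ =>
    (continuous_apply i).mul (continuous_finset_sum _ fun j _ =>
      (continuous_const.mul (continuous_apply j)))

lemma sphere_compact' {n : Type*} [Fintype n] :
    IsCompact {z : n → ℝ | z ⬝ᵥ z = 1} := by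
  rw [Metric.isCompact_iff_isClosed_bounded]
  constructor
  · exact IsClosed.preimage continuous_dot_self' isClosed_singleton
  · rw [Metric.isBounded_iff_subset_closedBall 0]
    refine ⟨1, fun z hz => ?_⟩
    simp only [Metric.mem_closedBall, dist_zero_right]
    rw [pi_norm_le_iff_of_nonneg zero_le_one]
    intro i
    have h1 : z i * z i ≤ z ⬝ᵥ z :=
      Finset.single_le_sum (fun j _ => mul_self_nonneg (z j)) (Finset.mem_univ i)
    rw [Set.mem_setOf_eq] at hz
    rw [hz] at h1
    rw [Real.norm_eq_abs, abs_le]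
    constructor <;> nlinarith

lemma quad_smul' {n : Type*} [Fintype n] (Q : Matrix n n ℝ) (c : ℝ) (z : n → ℝ) :
    (c • z) ⬝ᵥ Q.mulVec (c • z) = c^2 * (z ⬝ᵥ Q.mulVec z) := by
  rw [Matrix.mulVec_smul, smul_dotProduct, dotProduct_smul]
  simp only [smul_eq_mul]; ring

lemma quad_lower' {n : Type*} [Fintype n] {Q : Matrix n n ℝ} (hQ : Q.PosDef) :
    ∃ α : ℝ, 0 < α ∧ ∀ z : n → ℝ, α * (z ⬝ᵥ z) ≤ z ⬝ᵥ Q.mulVec z := by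
  cases isEmpty_or_nonempty n with
  | inl h =>
    exact ⟨1, one_pos, fun z => by simp [dotProduct]⟩
  | inr h =>
    classical
    obtain ⟨i0⟩ := h
    have hSne : ({z : n → ℝ | z ⬝ᵥ z = 1}).Nonempty := by
      refine ⟨Pi.single i0 1, ?_⟩
      simp [dotProduct, Pi.single_apply]
    obtain ⟨z0, hz0S, hmin⟩ := sphere_compact'.exists_isMinOn hSne (continuous_quad' Q).continuousOn
    have hz0ne : z0 ≠ 0 := by
      intro hz; rw [Set.mem_setOf_eq, hz] at hz0S; simp [dotProduct] at hz0S
    have hα : 0 < z0 ⬝ᵥ Q.mulVec z0 := by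
      have := hQ.dotProduct_mulVec_pos hz0ne
      simpa using this
    refine ⟨_, hα, fun z => ?_⟩
    rcases eq_or_lt_of_le (dot_self_nonneg' z) with hz0 | hzpos
    · have hz := dot_self_eq_zero' hz0.symm
      subst hz; simp [dotProduct]
    · set c : ℝ := Real.sqrt (z ⬝ᵥ z) with hc
      have hcpos : 0 < c := Real.sqrt_pos.2 hzpos
      have hc2 : c^2 = z ⬝ᵥ z := Real.sq_sqrt hzpos.le
      have hwS : (c⁻¹ • z) ∈ {w : n → ℝ | w ⬝ᵥ w = 1} := by
        have : (c⁻¹ • z) ⬝ᵥ (c⁻¹ • z) = (c⁻¹)^2 * (z ⬝ᵥ z) := by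
          rw [smul_dotProduct, dotProduct_smul]; simp only [smul_eq_mul]; ring
        rw [Set.mem_setOf_eq, this, ← hc2]
        field_simp
      have hle := hmin hwS
      have hq : (c⁻¹ • z) ⬝ᵥ Q.mulVec (c⁻¹ • z) = (c⁻¹)^2 * (z ⬝ᵥ Q.mulVec z) :=
        quad_smul' Q c⁻¹ z
      have hle' : z0 ⬝ᵥ Q.mulVec z0 ≤ (c⁻¹)^2 * (z ⬝ᵥ Q.mulVec z) := by
        simpa [hq] using hle
      have hc2pos : (0:ℝ) < c^2 := by positivity
      calc z0 ⬝ᵥ Q.mulVec z0 * (z ⬝ᵥ z) = (z0 ⬝ᵥ Q.mulVec z0) * c^2 := by rw [hc2]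
        _ ≤ ((c⁻¹)^2 * (z ⬝ᵥ Q.mulVec z)) * c^2 := by nlinarith
        _ = z ⬝ᵥ Q.mulVec z := by field_simp

lemma quad_upper' {n : Type*} [Fintype n] (Q : Matrix n n ℝ) :
    ∃ β : ℝ, 0 < β ∧ ∀ z : n → ℝ, z ⬝ᵥ Q.mulVec z ≤ β * (z ⬝ᵥ z) := by
  cases isEmpty_or_nonempty n with
  | inl h =>
    exact ⟨1, one_pos, fun z => by simp [dotProduct]⟩
  | inr h =>
    classical
    obtain ⟨i0⟩ := h
    have hSne : ({z : n → ℝ | z ⬝ᵥ z = 1}).Nonempty := by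
      refine ⟨Pi.single i0 1, ?_⟩
      simp [dotProduct, Pi.single_apply]
    obtain ⟨z0, hz0S, hmax⟩ := sphere_compact'.exists_isMaxOn hSne (continuous_quad' Q).continuousOn
    set β : ℝ := max (z0 ⬝ᵥ Q.mulVec z0) 1 with hβ
    refine ⟨β, lt_of_lt_of_le one_pos (le_max_right _ _), fun z => ?_⟩
    rcases eq_or_lt_of_le (dot_self_nonneg' z) with hz0 | hzpos
    · have hz := dot_self_eq_zero' hz0.symm
      subst hz; simp [dotProduct]
    · set c : ℝ := Real.sqrt (z ⬝ᵥ z) with hc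
      have hcpos : 0 < c := Real.sqrt_pos.2 hzpos
      have hc2 : c^2 = z ⬝ᵥ z := Real.sq_sqrt hzpos.le
      have hwS : (c⁻¹ • z) ∈ {w : n → ℝ | w ⬝ᵥ w = 1} := by
        have : (c⁻¹ • z) ⬝ᵥ (c⁻¹ • z) = (c⁻¹)^2 * (z ⬝ᵥ z) := by
          rw [smul_dotProduct, dotProduct_smul]; simp only [smul_eq_mul]; ring
        rw [Set.mem_setOf_eq, this, ← hc2]
        field_simp
      have hle := hmax hwS
      have hq : (c⁻¹ • z) ⬝ᵥ Q.mulVec (c⁻¹ • z) = (c⁻¹)^2 * (z ⬝ᵥ Q.mulVec z) :=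
        quad_smul' Q c⁻¹ z
      have hle' : (c⁻¹)^2 * (z ⬝ᵥ Q.mulVec z) ≤ β := by
        have h2 : (c⁻¹ • z) ⬝ᵥ Q.mulVec (c⁻¹ • z) ≤ z0 ⬝ᵥ Q.mulVec z0 := hle
        rw [hq] at h2
        exact h2.trans (le_max_left _ _)
      have hc2pos : (0:ℝ) < c^2 := by positivity
      have heq : z ⬝ᵥ Q.mulVec z = ((c⁻¹)^2 * (z ⬝ᵥ Q.mulVec z)) * c^2 := by field_simp
      rw [heq, ← hc2]
      nlinarith

lemma dot_transpose_mulVec' {n p : Type*} [Fintype n] [Fintype p]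
    (A : Matrix p n ℝ) (u : n → ℝ) (y : p → ℝ) :
    u ⬝ᵥ (Aᵀ.mulVec y) = (A.mulVec u) ⬝ᵥ y := by
  rw [Matrix.dotProduct_mulVec, Matrix.vecMul_transpose]

/-- `|w ⬝ᵥ H *ᵥ w| ≤ ‖H‖ * (w ⬝ᵥ w)` for the L2 operator norm. -/
lemma abs_dot_mulVec_le {m : ℕ} (H : Matrix (Fin m) (Fin m) ℝ) (w : Fin m → ℝ) :
    |w ⬝ᵥ H.mulVec w| ≤ ‖H‖ * (w ⬝ᵥ w) := by
  set W : EuclideanSpace ℝ (Fin m) := (EuclideanSpace.equiv (Fin m) ℝ).symm w with hW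
  set V : EuclideanSpace ℝ (Fin m) := (EuclideanSpace.equiv (Fin m) ℝ).symm (H.mulVec w) with hV
  have hinner : w ⬝ᵥ H.mulVec w = (inner ℝ W V : ℝ) := by
    simp [PiLp.inner_apply, RCLike.inner_apply, dotProduct, hW, hV, mul_comm]
  have hCS : |(inner ℝ W V : ℝ)| ≤ ‖W‖ * ‖V‖ := abs_real_inner_le_norm W V
  have hVle : ‖V‖ ≤ ‖H‖ * ‖W‖ := H.l2_opNorm_mulVec W
  have hWsq : ‖W‖^2 = w ⬝ᵥ w := by
    have := real_inner_self_eq_norm_sq W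
    rw [← this]
    simp only [hW, PiLp.inner_apply, RCLike.inner_apply, dotProduct, conj_trivial]
    simp
  have hH : (0:ℝ) ≤ ‖H‖ := norm_nonneg _
  have hWn : (0:ℝ) ≤ ‖W‖ := norm_nonneg _
  calc |w ⬝ᵥ H.mulVec w| = |(inner ℝ W V : ℝ)| := by rw [hinner]
    _ ≤ ‖W‖ * ‖V‖ := hCS
    _ ≤ ‖W‖ * (‖H‖ * ‖W‖) := by nlinarith [norm_nonneg V]
    _ = ‖H‖ * ‖W‖^2 := by ring
    _ = ‖H‖ * (w ⬝ᵥ w) := by rw [hWsq]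

end Aux

/-- given a strict block Lyapunov LMI certificate `P` and the
Carnevale–Teel clock function `φ`, the hybrid Lyapunov function
`U(t) = x(t)ᵀPx(t) + φ(t)e(t)ᵀe(t)` decays at a uniform exponential rate `ρ*` along all
trajectories of `ẋ = Āx + He`, `ė = −ẋ`. -/
theorem stmt5 {m : ℕ} (Abar H P : Matrix (Fin m) (Fin m) ℝ)
    (χ κ : ℝ) (hχ : 0 < χ) (hκ : ‖H‖ ≤ κ)
    (hPsymm : Pᵀ = P) (hP : P.PosDef)
    (hLMI : (-(Matrix.fromBlocks
        (Abarᵀ * P + P * Abar + (1 / χ) • (Abarᵀ * Abar)) (P * H)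
        (Hᵀ * P) (-(χ • (1 : Matrix (Fin m) (Fin m) ℝ))))).PosDef)
    (lam T : ℝ) (hlam : lam ∈ Set.Ioo (0:ℝ) 1) (hT : 0 < T)
    (φ : ℝ → ℝ)
    (hφderiv : ∀ τ ∈ Set.Icc (0:ℝ) T,
      HasDerivWithinAt φ (-2 * κ * φ τ - χ * ((φ τ) ^ 2 + 1)) (Set.Icc (0:ℝ) T) τ)
    (hφbound : ∀ τ ∈ Set.Icc (0:ℝ) T, lam ≤ φ τ ∧ φ τ ≤ lam⁻¹) :
    ∃ ρ : ℝ, 0 < ρ ∧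
      ∀ x e : ℝ → Fin m → ℝ,
        (∀ t ∈ Set.Icc (0:ℝ) T,
          HasDerivWithinAt x (Abar.mulVec (x t) + H.mulVec (e t)) (Set.Icc (0:ℝ) T) t) →
        (∀ t ∈ Set.Icc (0:ℝ) T,
          HasDerivWithinAt e (-(Abar.mulVec (x t) + H.mulVec (e t))) (Set.Icc (0:ℝ) T) t) →
        ∀ t ∈ Set.Icc (0:ℝ) T, ∀ d : ℝ,
          HasDerivWithinAt (fun s => x s ⬝ᵥ P.mulVec (x s) + φ s * (e s ⬝ᵥ e s)) d
            (Set.Icc (0:ℝ) T) t →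
          d ≤ -ρ * (x t ⬝ᵥ P.mulVec (x t) + φ t * (e t ⬝ᵥ e t)) := by
  obtain ⟨hlam0, hlam1⟩ := hlam
  set M : Matrix (Fin m ⊕ Fin m) (Fin m ⊕ Fin m) ℝ :=
    Matrix.fromBlocks
        (Abarᵀ * P + P * Abar + (1 / χ) • (Abarᵀ * Abar)) (P * H)
        (Hᵀ * P) (-(χ • (1 : Matrix (Fin m) (Fin m) ℝ))) with hM
  obtain ⟨α, hαpos, hα⟩ := quad_lower' hLMI
  obtain ⟨β, hβpos, hβ⟩ := quad_upper' P
  set C : ℝ := max β lam⁻¹ with hC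
  have hCpos : 0 < C := lt_of_lt_of_le hβpos (le_max_left _ _)
  refine ⟨α / C, div_pos hαpos hCpos, ?_⟩
  intro x e hx he t ht d hd
  set u : Fin m → ℝ := x t with hu
  set w : Fin m → ℝ := e t with hw
  set a : Fin m → ℝ := Abar.mulVec u with ha
  set hh : Fin m → ℝ := H.mulVec w with hhh
  set p : ℝ := φ t with hp
  -- derivative identification
  have h1 := hasDerivWithinAt_dot' (hx t ht) (hasDerivWithinAt_mulVec' P (hx t ht))
  have h2 := (hφderiv t ht).mul (hasDerivWithinAt_dot' (he t ht) (he t ht))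
  have hUD := h1.add h2
  have hud : UniqueDiffWithinAt ℝ (Set.Icc (0:ℝ) T) t := (uniqueDiffOn_Icc hT) t ht
  have hdD : d = ((a + hh) ⬝ᵥ P.mulVec u + u ⬝ᵥ P.mulVec (a + hh)) +
        ((-2 * κ * p - χ * (p ^ 2 + 1)) * (w ⬝ᵥ w) +
          p * ((-(a + hh)) ⬝ᵥ w + w ⬝ᵥ (-(a + hh)))) :=
    (hd.derivWithin hud).symm.trans (hUD.derivWithin hud)
  -- expand d
  have hd_exp : d = a ⬝ᵥ P.mulVec u + hh ⬝ᵥ P.mulVec u + (u ⬝ᵥ P.mulVec a + u ⬝ᵥ P.mulVec hh) +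
      ((-2 * κ * p - χ * (p ^ 2 + 1)) * (w ⬝ᵥ w) +
        p * (-(w ⬝ᵥ a + w ⬝ᵥ hh) + -(w ⬝ᵥ a + w ⬝ᵥ hh))) := by
    rw [hdD, add_dotProduct, Matrix.mulVec_add, dotProduct_add,
      neg_dotProduct, dotProduct_neg, add_dotProduct,
      dotProduct_add, dotProduct_comm a w, dotProduct_comm hh w]
  -- block quadratic form
  set z : Fin m ⊕ Fin m → ℝ := Sum.elim u w with hz
  have hzz : z ⬝ᵥ z = u ⬝ᵥ u + w ⬝ᵥ w := sumElim_dotProduct_sumElim u u w w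
  have hMz : z ⬝ᵥ M.mulVec z = a ⬝ᵥ P.mulVec u + u ⬝ᵥ P.mulVec a + (1/χ) * (a ⬝ᵥ a)
      + u ⬝ᵥ P.mulVec hh + hh ⬝ᵥ P.mulVec u - χ * (w ⬝ᵥ w) := by
    rw [hz, hM, Matrix.fromBlocks_mulVec]
    simp only [Sum.elim_comp_inl, Sum.elim_comp_inr]
    rw [sumElim_dotProduct_sumElim]
    simp only [Matrix.add_mulVec, Matrix.smul_mulVec, dotProduct_add,
      dotProduct_smul, ← Matrix.mulVec_mulVec, Matrix.neg_mulVec, Matrix.one_mulVec,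
      dotProduct_neg, dot_transpose_mulVec', smul_eq_mul]
    rw [← ha, ← hhh]
    ring
  clear_value u w a hh p z M C
  -- LMI bound
  have hquadM : z ⬝ᵥ M.mulVec z ≤ -α * (u ⬝ᵥ u + w ⬝ᵥ w) := by
    have h3 := hα z
    rw [Matrix.neg_mulVec, dotProduct_neg, hzz] at h3
    linarith
  -- Young inequality for the Abar cross term
  have key1 : -(2 * p * (w ⬝ᵥ a)) ≤ χ * p^2 * (w ⬝ᵥ w) + χ⁻¹ * (a ⬝ᵥ a) := by
    have hy : (p • w + χ⁻¹ • a) ⬝ᵥ (p • w + χ⁻¹ • a)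
        = p^2 * (w ⬝ᵥ w) + 2 * p * χ⁻¹ * (w ⬝ᵥ a) + (χ⁻¹)^2 * (a ⬝ᵥ a) := by
      simp only [add_dotProduct, dotProduct_add, smul_dotProduct,
        dotProduct_smul, smul_eq_mul, dotProduct_comm a w]
      ring
    have h0 : 0 ≤ χ * ((p • w + χ⁻¹ • a) ⬝ᵥ (p • w + χ⁻¹ • a)) :=
      mul_nonneg hχ.le (dot_self_nonneg' _)
    rw [hy] at h0
    have hχne : χ ≠ 0 := ne_of_gt hχ
    have hexp : χ * (p^2 * (w ⬝ᵥ w) + 2 * p * χ⁻¹ * (w ⬝ᵥ a) + (χ⁻¹)^2 * (a ⬝ᵥ a))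
        = χ * p^2 * (w ⬝ᵥ w) + 2 * p * (w ⬝ᵥ a) + χ⁻¹ * (a ⬝ᵥ a) := by
      field_simp
    rw [hexp] at h0
    linarith
  -- norm bound for the H cross term
  have hκ0 : (0:ℝ) ≤ κ := le_trans (norm_nonneg H) hκ
  have hp0 : 0 < p := by rw [hp]; exact lt_of_lt_of_le hlam0 (hφbound t ht).1
  have key2 : -(2 * p * (w ⬝ᵥ hh)) ≤ 2 * p * κ * (w ⬝ᵥ w) := by
    have habs : |w ⬝ᵥ hh| ≤ ‖H‖ * (w ⬝ᵥ w) := by rw [hhh]; exact abs_dot_mulVec_le H w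
    have hww : (0:ℝ) ≤ w ⬝ᵥ w := dot_self_nonneg' w
    have h4 : -(w ⬝ᵥ hh) ≤ κ * (w ⬝ᵥ w) := by
      have := neg_abs_le (w ⬝ᵥ hh)
      nlinarith
    nlinarith
  -- d is bounded by the quadratic form
  have hd_le : d ≤ -α * (u ⬝ᵥ u + w ⬝ᵥ w) := by
    have hone : (1:ℝ)/χ = χ⁻¹ := one_div χ
    rw [hone] at hMz
    linarith [hquadM, hMz.ge, hMz.le, hd_exp.le, key1, key2]
  -- upper bound on U
  have hU_le : u ⬝ᵥ P.mulVec u + p * (w ⬝ᵥ w) ≤ C * (u ⬝ᵥ u + w ⬝ᵥ w) := by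
    have h5 : u ⬝ᵥ P.mulVec u ≤ β * (u ⬝ᵥ u) := hβ u
    have h6 : p ≤ lam⁻¹ := by rw [hp]; exact (hφbound t ht).2
    have hww : (0:ℝ) ≤ w ⬝ᵥ w := dot_self_nonneg' w
    have huu : (0:ℝ) ≤ u ⬝ᵥ u := dot_self_nonneg' u
    have hb : β ≤ C := by rw [hC]; exact le_max_left _ _
    have hl : lam⁻¹ ≤ C := by rw [hC]; exact le_max_right _ _
    have h7 : p * (w ⬝ᵥ w) ≤ lam⁻¹ * (w ⬝ᵥ w) := mul_le_mul_of_nonneg_right h6 hww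
    have h8 : lam⁻¹ * (w ⬝ᵥ w) ≤ C * (w ⬝ᵥ w) := mul_le_mul_of_nonneg_right hl hww
    have h9 : β * (u ⬝ᵥ u) ≤ C * (u ⬝ᵥ u) := mul_le_mul_of_nonneg_right hb huu
    nlinarith [h5, h7, h8, h9]
  have hρC : α / C * C = α := div_mul_cancel₀ α (ne_of_gt hCpos)
  have hρpos : 0 < α / C := div_pos hαpos hCpos
  have hfinal := mul_le_mul_of_nonneg_left hU_le hρpos.le
  have hfinal2 : α / C * (C * (u ⬝ᵥ u + w ⬝ᵥ w)) = α * (u ⬝ᵥ u + w ⬝ᵥ w) := by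
    rw [← mul_assoc, hρC]
  rw [hfinal2] at hfinal
  linarith [hd_le, hfinal]
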